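/- Let A, B, K : ℝ^m → matrices (of compatible sizes n×n, n×p, p×n over ℝ), let M : ℝ^m → Matrix (Fin n) (Fin n) ℝ be differentiable with M(σ) symmetric positive definite for each σ, and let λ ∈ ℝ. Define W(σ) = M(σ)⁻¹ and L(σ) = K(σ)W(σ), and set 𝒜(σ) = A(σ) + B(σ)K(σ). Fix σ ∈ ℝ^m and ρ ∈ ℝ^m. Then the matrix inequality M(σ)𝒜(σ) + 𝒜(σ)ᵀM(σ) + 2λM(σ) + Σᵢ ρᵢ·(∂M/∂σᵢ)(σ) ≺ 0 holds if and only if A(σ)W(σ) + B(σ)L(σ) + (A(σ)W(σ) + B(σ)L(σ))ᵀ + 2λW(σ) − Σᵢ ρᵢ·(∂W/∂σᵢ)(σ) ≺ 0, where (∂W/∂σᵢ)(σ) = −W(σ)(∂M/∂σᵢ)(σ)W(σ). -/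

import Mathlib

open Matrix Set

/-- Partial derivative of a matrix-valued function `M` with respect to the `i`-th
coordinate of its argument, taken entrywise. -/
noncomputable def matPartial {m n p : ℕ} (M : (Fin m → ℝ) → Matrix (Fin n) (Fin p) ℝ)
    (i : Fin m) (σ : Fin m → ℝ) : Matrix (Fin n) (Fin p) ℝ :=
  Matrix.of fun j k => fderiv ℝ (fun σ' => M σ' j k) σ (Pi.single i 1)

lemma posdef_congr {n : ℕ} {X W : Matrix (Fin n) (Fin n) ℝ} (hX : X.PosDef)
    (hW : IsUnit W) : (Wᵀ * X * W).PosDef := by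
  refine posDef_iff_dotProduct_mulVec.2 ⟨?_, ?_⟩
  · have h := hX.isHermitian
    simp only [IsHermitian, conjTranspose_eq_transpose_of_trivial] at h ⊢
    simp [Matrix.transpose_mul, Matrix.mul_assoc, h]
  · intro x hx
    have hWx : W *ᵥ x ≠ 0 := fun h => hx (Matrix.mulVec_injective_iff_isUnit.2 hW (by simp [h]))
    have := hX.dotProduct_mulVec_pos hWx
    simpa [Matrix.mul_assoc, dotProduct_mulVec, ← Matrix.vecMul_vecMul,
      vecMul_transpose] using this

lemma posdef_congr_iff {n : ℕ} {X W : Matrix (Fin n) (Fin n) ℝ} (hW : IsUnit W) :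
    X.PosDef ↔ (Wᵀ * X * W).PosDef := by
  refine ⟨fun h => posdef_congr h hW, fun h => ?_⟩
  have hdet : IsUnit W.det := (Matrix.isUnit_iff_isUnit_det W).1 hW
  have hWinv : IsUnit W⁻¹ :=
    (Matrix.isUnit_iff_isUnit_det _).2 (Matrix.isUnit_nonsing_inv_det W hdet)
  have h2 := posdef_congr h hWinv
  have : (W⁻¹)ᵀ * (Wᵀ * X * W) * W⁻¹ = X := by
    rw [Matrix.transpose_nonsing_inv]
    rw [show Wᵀ * X * W = Wᵀ * (X * W) from Matrix.mul_assoc _ _ _,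
      Matrix.nonsing_inv_mul_cancel_left _ _ (by simpa using hdet),
      Matrix.mul_assoc, Matrix.mul_nonsing_inv _ hdet, Matrix.mul_one]
  rwa [this] at h2

/-- **Congruence transformation of the LPV synthesis LMI.** With `W(σ) = M(σ)⁻¹`,
`L(σ) = K(σ)W(σ)`, `𝒜(σ) = A(σ) + B(σ)K(σ)` and `∂W/∂σᵢ = -W (∂M/∂σᵢ) W`, the matrix
inequality `M𝒜 + 𝒜ᵀM + 2λM + ∑ᵢ ρᵢ ∂M/∂σᵢ ≺ 0` holds iff
`AW + BL + (AW + BL)ᵀ + 2λW - ∑ᵢ ρᵢ ∂W/∂σᵢ ≺ 0` (negative definiteness stated as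
positive definiteness of the negation). -/
theorem lpv_congruence_transformation {m n p : ℕ}
    (A : (Fin m → ℝ) → Matrix (Fin n) (Fin n) ℝ)
    (B : (Fin m → ℝ) → Matrix (Fin n) (Fin p) ℝ)
    (K : (Fin m → ℝ) → Matrix (Fin p) (Fin n) ℝ)
    (M : (Fin m → ℝ) → Matrix (Fin n) (Fin n) ℝ)
    (hMdiff : ∀ j k, Differentiable ℝ fun σ => M σ j k)
    (hMpos : ∀ σ, (M σ).PosDef)
    (lam : ℝ) (σ ρ : Fin m → ℝ) :
    (-(M σ * (A σ + B σ * K σ) + (A σ + B σ * K σ)ᵀ * M σ + (2 * lam) • M σ +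
        ∑ i, ρ i • matPartial M i σ)).PosDef ↔
    (-(A σ * (M σ)⁻¹ + B σ * (K σ * (M σ)⁻¹) +
        (A σ * (M σ)⁻¹ + B σ * (K σ * (M σ)⁻¹))ᵀ + (2 * lam) • (M σ)⁻¹ -
        ∑ i, ρ i • (-((M σ)⁻¹ * matPartial M i σ * (M σ)⁻¹)))).PosDef := by
  set N := M σ with hN
  set W := N⁻¹ with hWdef
  have hNpd := hMpos σ
  have hdet : IsUnit N.det := hNpd.isUnit.map (MonoidHom.id _) |> fun _ =>
    (Matrix.isUnit_iff_isUnit_det N).1 hNpd.isUnit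
  have hNT : Nᵀ = N := by
    have := hNpd.isHermitian
    rwa [IsHermitian, conjTranspose_eq_transpose_of_trivial] at this
  have hWT : Wᵀ = W := by rw [hWdef, Matrix.transpose_nonsing_inv, hNT]
  have hWN : W * N = 1 := Matrix.nonsing_inv_mul N hdet
  have hNW : N * W = 1 := Matrix.mul_nonsing_inv N hdet
  have hW : IsUnit W :=
    (Matrix.isUnit_iff_isUnit_det _).2 (Matrix.isUnit_nonsing_inv_det N hdet)
  rw [posdef_congr_iff hW, hWT]
  have hcl : ∀ X : Matrix (Fin n) (Fin n) ℝ, W * (N * X) = X := fun X => by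
    rw [← Matrix.mul_assoc, hWN, Matrix.one_mul]
  have key : W * (-(N * (A σ + B σ * K σ) + (A σ + B σ * K σ)ᵀ * N + (2 * lam) • N +
        ∑ i, ρ i • matPartial M i σ)) * W
      = -(A σ * W + B σ * (K σ * W) + (A σ * W + B σ * (K σ * W))ᵀ + (2 * lam) • W -
        ∑ i, ρ i • (-(W * matPartial M i σ * W))) := by
    simp only [Matrix.mul_neg, Matrix.neg_mul, Matrix.mul_add, Matrix.add_mul,
      Matrix.mul_sum, Matrix.sum_mul, Matrix.smul_mul, Matrix.mul_smul,
      Matrix.mul_assoc, hcl, hNW, hWN, Matrix.mul_one, Matrix.one_mul,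
      Matrix.transpose_add, Matrix.transpose_mul, hWT, sub_eq_add_neg, neg_neg,
      smul_neg, Finset.sum_neg_distrib, neg_add_rev]
  rw [key]
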